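/- Let P be a lattice (d,k)-polytope with d ≥ 3, and let u, v be vertices of P whose edge-graph distance equals δ(d−1,k)+k (assuming such exists). Then u + v = (k,k,...,k). -/

import Mathlib

open Set

noncomputable def edgeGraph (d : ℕ) (P : Set (Fin d → ℝ)) : SimpleGraph (Fin d → ℝ) where
  Adj a b := a ≠ b ∧ IsExtreme ℝ P (segment ℝ a b)
  symm := by
    constructor
    intro a b h
    try dsimp only at h ⊢
    exact ⟨h.1.symm, by rw [segment_symm]; exact h.2⟩
  loopless := by
    constructor
    intro a h
    exact h.1 rfl

/-- Edge-graph diameter of a polytope, as the sup of pairwise distances between vertices. -/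
noncomputable def polyDiam (d : ℕ) (P : Set (Fin d → ℝ)) : ℕ :=
  sSup {n : ℕ | ∃ u ∈ P.extremePoints ℝ, ∃ v ∈ P.extremePoints ℝ,
    (edgeGraph d P).dist u v = n}

/-- A lattice (d,k)-polytope: convex hull of a nonempty finite set of points in {0,…,k}^d. -/
def IsLatticePolytope (d k : ℕ) (P : Set (Fin d → ℝ)) : Prop :=
  ∃ V : Finset (Fin d → ℝ), V.Nonempty ∧
    (∀ x ∈ V, ∀ i, ∃ m : ℕ, m ≤ k ∧ x i = (m : ℝ)) ∧
    P = convexHull ℝ (V : Set (Fin d → ℝ))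

/-- δ(d,k): the largest edge-graph diameter of a lattice (d,k)-polytope. -/
noncomputable def deltaLP (d k : ℕ) : ℕ :=
  sSup {n : ℕ | ∃ P : Set (Fin d → ℝ), IsLatticePolytope d k P ∧ polyDiam d P = n}



section Helpers

variable {E : Type*} [NormedAddCommGroup E] [NormedSpace ℝ E]

/-- The left endpoint of a segment is an extreme point of the segment. -/
lemma left_mem_extremePoints_segment (a b : E) :
    a ∈ (segment ℝ a b).extremePoints ℝ := by
  refine ⟨left_mem_segment ℝ a b, ?_⟩
  intro x₁ h₁ x₂ h₂ hx
  by_cases hab : b = a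
  · subst hab
    rw [segment_same] at h₁ h₂
    exact h₁
  · rw [segment_eq_image'] at h₁ h₂
    obtain ⟨s₁, hs₁, rfl⟩ := h₁
    obtain ⟨s₂, hs₂, rfl⟩ := h₂
    obtain ⟨t₁, t₂, ht₁, ht₂, hsum, heq⟩ := hx
    have hba : b - a ≠ 0 := sub_ne_zero.2 hab
    have hkey : (t₁ * s₁ + t₂ * s₂) • (b - a) = 0 := by
      have : t₁ • (a + s₁ • (b - a)) + t₂ • (a + s₂ • (b - a)) - (t₁ + t₂) • a
          = (t₁ * s₁ + t₂ * s₂) • (b - a) := by module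
      rw [← this, heq, hsum, one_smul, sub_self]
    have hs : t₁ * s₁ + t₂ * s₂ = 0 := by
      rcases smul_eq_zero.1 hkey with h | h
      · exact h
      · exact absurd h hba
    have h1 : s₁ = 0 := by nlinarith [hs₁.1, hs₂.1, mul_nonneg ht₁.le hs₁.1, mul_nonneg ht₂.le hs₂.1]
    have h2 : s₂ = 0 := by nlinarith [hs₁.1, hs₂.1, mul_nonneg ht₁.le hs₁.1, mul_nonneg ht₂.le hs₂.1]
    simp [h1, h2]

lemma right_mem_extremePoints_segment (a b : E) :
    b ∈ (segment ℝ a b).extremePoints ℝ := by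
  rw [segment_symm]; exact left_mem_extremePoints_segment b a

/-- Endpoints of an extreme segment are extreme points. -/
lemma IsExtreme.endpoints_mem {A : Set E} {a b : E}
    (h : IsExtreme ℝ A (segment ℝ a b)) :
    a ∈ A.extremePoints ℝ ∧ b ∈ A.extremePoints ℝ :=
  ⟨h.extremePoints_subset_extremePoints (left_mem_extremePoints_segment a b),
   h.extremePoints_subset_extremePoints (right_mem_extremePoints_segment a b)⟩

/-- A generic functional not vanishing on finitely many nonzero vectors. -/
lemma exists_functional_ne (D : Finset E) (hD : ∀ q ∈ D, q ≠ (0 : E)) :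
    ∃ h : E →L[ℝ] ℝ, ∀ q ∈ D, h q ≠ 0 := by
  classical
  induction D using Finset.induction_on with
  | empty => exact ⟨0, by simp⟩
  | @insert a s ha ih =>
    obtain ⟨h, hh⟩ := ih (fun q hq => hD q (Finset.mem_insert_of_mem hq))
    have ha0 : a ≠ 0 := hD a (Finset.mem_insert_self a s)
    obtain ⟨ψ, -, hψa⟩ := exists_dual_vector ℝ a (norm_ne_zero_iff.2 ha0)
    have hψa0 : ψ a ≠ 0 := by rw [hψa]; exact norm_ne_zero_iff.2 ha0
    set bad : Finset ℝ := (insert a s).image (fun p => -(h p) / (ψ p)) with hbad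
    obtain ⟨ε, -, hε⟩ := Set.infinite_univ (α := ℝ).exists_notMem_finset bad
    refine ⟨h + ε • ψ, ?_⟩
    intro q hq
    simp only [ContinuousLinearMap.add_apply, ContinuousLinearMap.coe_smul',
      Pi.smul_apply, smul_eq_mul]
    intro h0
    by_cases hψq : ψ q = 0
    · rcases Finset.mem_insert.1 hq with rfl | hq'
      · exact hψa0 hψq
      · rw [hψq, mul_zero, add_zero] at h0
        exact hh q hq' h0
    · apply hε
      rw [hbad, Finset.mem_image]
      refine ⟨q, hq, ?_⟩
      field_simp
      linarith [h0]

lemma le_on_convexHull {S : Set E} {φ : E →L[ℝ] ℝ} {m : ℝ} (h : ∀ y ∈ S, m ≤ φ y) :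
    ∀ x ∈ convexHull ℝ S, m ≤ φ x := by
  intro x hx
  have : convexHull ℝ S ⊆ {x | m ≤ φ x} :=
    convexHull_min h (convex_halfSpace_ge ⟨φ.map_add, φ.map_smul⟩ m)
  exact this hx

end Helpers
section Faces

variable {E : Type*} [NormedAddCommGroup E] [NormedSpace ℝ E]

/-- The minimizing face of the hull of a finite set is the hull of the minimizers. -/
lemma face_hull_eq (S : Finset E) (φ : E →L[ℝ] ℝ) (m : ℝ) (hmin : ∀ y ∈ S, m ≤ φ y) :
    {x ∈ convexHull ℝ (S : Set E) | φ x = m} =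
      convexHull ℝ ((S.filter (fun y => φ y = m)) : Set E) := by
  classical
  ext x
  constructor
  · rintro ⟨hx, hxm⟩
    rw [Finset.convexHull_eq] at hx
    obtain ⟨w, hw0, hw1, hwx⟩ := hx
    have hxrep : x = ∑ y ∈ S, w y • y := by
      rw [← hwx, Finset.centerMass_eq_of_sum_1 _ _ hw1]; rfl
    have hφx : ∑ y ∈ S, w y * φ y = m := by
      rw [← hxm, hxrep, map_sum]
      simp [smul_eq_mul]
    have hzero : ∀ y ∈ S, w y * (φ y - m) = 0 := by
      rw [← Finset.sum_eq_zero_iff_of_nonneg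
        (fun y hy => mul_nonneg (hw0 y hy) (sub_nonneg.2 (hmin y hy)))]
      have : ∑ y ∈ S, w y * (φ y - m) = (∑ y ∈ S, w y * φ y) - m * ∑ y ∈ S, w y := by
        rw [Finset.mul_sum, ← Finset.sum_sub_distrib]; congr 1; ext y; ring
      rw [this, hφx, hw1, mul_one, sub_self]
    have hwvanish : ∀ y ∈ S, ¬ (φ y = m) → w y = 0 := by
      intro y hy hne
      have := hzero y hy
      rcases mul_eq_zero.1 this with h | h
      · exact h
      · exact absurd (by linarith [sub_eq_zero.1 h] : φ y = m) hne
    rw [Finset.convexHull_eq]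
    have hsum1 : ∑ y ∈ S.filter (fun y => φ y = m), w y = 1 := by
      rw [← Finset.sum_filter_add_sum_filter_not S (fun y => φ y = m) w] at hw1
      have h2 : ∑ y ∈ S.filter (fun y => ¬ φ y = m), w y = 0 :=
        Finset.sum_eq_zero (fun y hy => hwvanish y (Finset.mem_filter.1 hy).1
          (Finset.mem_filter.1 hy).2)
      rw [h2, add_zero] at hw1; exact hw1
    refine ⟨w, fun y hy => hw0 y (Finset.filter_subset _ _ hy), hsum1, ?_⟩
    rw [Finset.centerMass_eq_of_sum_1 _ _ hsum1]
    rw [hxrep, ← Finset.sum_filter_add_sum_filter_not S (fun y => φ y = m) (fun y => w y • y)]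
    have h2 : ∑ y ∈ S.filter (fun y => ¬ φ y = m), w y • y = 0 :=
      Finset.sum_eq_zero (fun y hy => by
        rw [hwvanish y (Finset.mem_filter.1 hy).1 (Finset.mem_filter.1 hy).2, zero_smul])
    rw [h2, add_zero]; rfl
  · intro hx
    have hsub : convexHull ℝ ((S.filter (fun y => φ y = m)) : Set E)
        ⊆ convexHull ℝ (S : Set E) :=
      convexHull_mono (by exact_mod_cast Finset.filter_subset _ _)
    refine ⟨hsub hx, le_antisymm ?_ (le_on_convexHull hmin x (hsub hx))⟩
    have : convexHull ℝ ((S.filter (fun y => φ y = m)) : Set E) ⊆ {x | φ x ≤ m} :=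
      convexHull_min (fun y hy => by
        rcases Finset.mem_coe.1 hy with hy'
        exact le_of_eq (Finset.mem_filter.1 hy').2)
        (convex_halfSpace_le ⟨φ.map_add, φ.map_smul⟩ m)
    exact this hx

/-- The minimizing face is extreme. -/
lemma isExtreme_face (S : Finset E) (φ : E →L[ℝ] ℝ) (m : ℝ)
    (hmin : ∀ y ∈ S, m ≤ φ y) (hatt : ∃ y ∈ S, φ y = m) :
    IsExtreme ℝ (convexHull ℝ (S : Set E)) {x ∈ convexHull ℝ (S : Set E) | φ x = m} := by
  obtain ⟨y₀, hy₀S, hy₀⟩ := hatt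
  have hexp : IsExposed ℝ (convexHull ℝ (S : Set E))
      {x ∈ convexHull ℝ (S : Set E) | φ x = m} := by
    intro _
    refine ⟨-φ, ?_⟩
    ext x
    simp only [Set.mem_setOf_eq, ContinuousLinearMap.neg_apply, neg_le_neg_iff]
    constructor
    · rintro ⟨hx, hxm⟩
      exact ⟨hx, fun y hy => hxm ▸ le_on_convexHull hmin y hy⟩
    · rintro ⟨hx, hxall⟩
      refine ⟨hx, le_antisymm ?_ (le_on_convexHull hmin x hx)⟩
      have := hxall y₀ (subset_convexHull ℝ (S : Set E) hy₀S)
      rwa [hy₀] at this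
  exact hexp.isExtreme

/-- An extreme point of the hull of a finite set cannot lie in the hull of the others. -/
lemma extremePoint_not_mem_hull_erase [DecidableEq E] {S : Finset E} {u : E}
    (hu : u ∈ (convexHull ℝ (S : Set E)).extremePoints ℝ) :
    u ∉ convexHull ℝ ((S.erase u : Finset E) : Set E) := by
  classical
  have h := (convex_convexHull ℝ (S : Set E)).mem_extremePoints_iff_mem_diff_convexHull_diff.1 hu
  intro hmem
  apply h.2
  apply convexHull_mono _ hmem
  rw [Finset.coe_erase]
  exact Set.diff_subset_diff_left (subset_convexHull ℝ _)

/-- A strictly exposing functional at an extreme point. -/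
lemma exists_exposing (S : Finset E) {u : E}
    (hu : u ∈ (convexHull ℝ (S : Set E)).extremePoints ℝ) :
    ∃ g : E →L[ℝ] ℝ, ∀ y ∈ S, y ≠ u → g u < g y := by
  classical
  have hnot := extremePoint_not_mem_hull_erase hu
  obtain ⟨f, c, hfc, hc⟩ := geometric_hahn_banach_point_closed
    (convex_convexHull ℝ _) ((S.erase u).finite_toSet.isClosed_convexHull ℝ) hnot
  refine ⟨f, fun y hy hyne => hfc.trans (hc y ?_)⟩
  exact subset_convexHull ℝ _ (by simp [Finset.mem_erase, hyne, hy])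

/-- A strictly exposing functional, generic w.r.t. a finite family of nonzero vectors. -/
lemma exists_exposing_generic (S : Finset E) {u : E}
    (hu : u ∈ (convexHull ℝ (S : Set E)).extremePoints ℝ)
    (D : Finset E) (hD : ∀ q ∈ D, q ≠ (0 : E)) :
    ∃ g : E →L[ℝ] ℝ, (∀ y ∈ S, y ≠ u → g u < g y) ∧ (∀ q ∈ D, g q ≠ 0) := by
  classical
  obtain ⟨g₀, hg₀⟩ := exists_exposing S hu
  obtain ⟨h, hh⟩ := exists_functional_ne D hD
  set T := S.erase u with hT
  set bounds : Finset ℝ := (T.image (fun y => if 0 < h u - h y then (g₀ y - g₀ u) / (h u - h y) else 1)) ∪ {1} with hbounds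
  have hbne : bounds.Nonempty := ⟨1, by simp [hbounds]⟩
  set δ := bounds.min' hbne with hδ
  have hpos : ∀ x ∈ bounds, 0 < x := by
    intro x hx
    rw [hbounds, Finset.mem_union] at hx
    rcases hx with hx | hx
    · obtain ⟨y, hyT, rfl⟩ := Finset.mem_image.1 hx
      obtain ⟨hyne, hyS⟩ := Finset.mem_erase.1 hyT
      split_ifs with hcond
      · exact div_pos (sub_pos.2 (hg₀ y hyS hyne)) hcond
      · norm_num
    · simp only [Finset.mem_singleton] at hx; rw [hx]; norm_num
  have hδpos : 0 < δ := hpos _ (bounds.min'_mem hbne)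
  set bad : Finset ℝ := D.image (fun q => -(g₀ q) / (h q)) with hbad
  obtain ⟨ε, hεmem, hεbad⟩ := (Set.Ioo_infinite hδpos).exists_notMem_finset bad
  obtain ⟨hε0, hεδ⟩ := hεmem
  refine ⟨g₀ + ε • h, ?_, ?_⟩
  · intro y hyS hyne
    simp only [ContinuousLinearMap.add_apply, ContinuousLinearMap.coe_smul',
      Pi.smul_apply, smul_eq_mul]
    have hyT : y ∈ T := Finset.mem_erase.2 ⟨hyne, hyS⟩
    by_cases hcond : 0 < h u - h y
    · have hle : δ ≤ (g₀ y - g₀ u) / (h u - h y) := by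
        apply Finset.min'_le
        rw [hbounds, Finset.mem_union]
        left
        exact Finset.mem_image.2 ⟨y, hyT, by rw [if_pos hcond]⟩
      have : ε * (h u - h y) < g₀ y - g₀ u := by
        have := lt_of_lt_of_le hεδ hle
        calc ε * (h u - h y) < ((g₀ y - g₀ u) / (h u - h y)) * (h u - h y) := by
              exact mul_lt_mul_of_pos_right this hcond
          _ = g₀ y - g₀ u := div_mul_cancel₀ _ (ne_of_gt hcond)
      nlinarith
    · push_neg at hcond
      have h1 : ε * (h u - h y) ≤ 0 :=
        mul_nonpos_of_nonneg_of_nonpos hε0.le hcond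
      have h2 : g₀ u < g₀ y := hg₀ y hyS hyne
      nlinarith
  · intro q hq
    simp only [ContinuousLinearMap.add_apply, ContinuousLinearMap.coe_smul',
      Pi.smul_apply, smul_eq_mul]
    intro h0
    have hhq : h q ≠ 0 := hh q hq
    apply hεbad
    rw [hbad, Finset.mem_image]
    refine ⟨q, hq, ?_⟩
    field_simp
    linarith [h0]

end Faces
section Descent

variable {E : Type*} [NormedAddCommGroup E] [NormedSpace ℝ E]

/-- **Descent lemma**: at any vertex of a polytope which does not minimize a linear
functional, there is an edge to a vertex with strictly smaller value. -/
lemma descent (S : Finset E)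
    (hS : ∀ y ∈ S, y ∈ (convexHull ℝ (S : Set E)).extremePoints ℝ)
    {u : E} (huS : u ∈ S) (f : E →L[ℝ] ℝ) (hex : ∃ y ∈ S, f y < f u) :
    ∃ w ∈ S, f w < f u ∧ u ≠ w ∧
      IsExtreme ℝ (convexHull ℝ (S : Set E)) (segment ℝ u w) := by
  classical
  set Y := S.filter (fun y => f y < f u) with hYdef
  obtain ⟨y₁, hy₁S, hy₁f⟩ := hex
  have hYne : Y.Nonempty := ⟨y₁, Finset.mem_filter.2 ⟨hy₁S, hy₁f⟩⟩
  have hYS : ∀ y ∈ Y, y ∈ S := fun y hy => (Finset.mem_filter.1 hy).1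
  have hYf : ∀ y ∈ Y, f y < f u := fun y hy => (Finset.mem_filter.1 hy).2
  have hYu : ∀ y ∈ Y, y ≠ u := by
    intro y hy h
    rw [h] at hy
    exact lt_irrefl _ (hYf u hy)
  -- difference vectors for tie-breaking
  set q : E → E → E := fun y z => (f u - f z) • (y - u) - (f u - f y) • (z - u) with hq
  set D := ((Y ×ˢ Y).filter (fun p => p.1 ≠ p.2)).image (fun p => q p.1 p.2) with hD
  -- colinearity is impossible among distinct vertices
  have key : ∀ y ∈ Y, ∀ z ∈ Y, (f u - f z) • (y - u) = (f u - f y) • (z - u) →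
      f u - f z < f u - f y → False := by
    intro y hy z hz heq hlt
    have hαpos : 0 < f u - f z := sub_pos.2 (hYf z hz)
    have hβpos : 0 < f u - f y := sub_pos.2 (hYf y hy)
    -- z ∈ openSegment y u
    have hmem : z ∈ openSegment ℝ y u := by
      refine ⟨(f u - f z) / (f u - f y), ((f u - f y) - (f u - f z)) / (f u - f y),
        div_pos hαpos hβpos, div_pos (by linarith) hβpos, ?_, ?_⟩
      · field_simp; ring
      · have hzero : ((f u - f z) / (f u - f y)) • y
            + (((f u - f y) - (f u - f z)) / (f u - f y)) • u - z
            = ((f u - f y)⁻¹ : ℝ) • ((f u - f z) • (y - u) - (f u - f y) • (z - u)) := by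
          match_scalars <;> field_simp <;> ring
        rw [heq, sub_self, smul_zero] at hzero
        exact sub_eq_zero.1 hzero
    have hzext := (hS z (hYS z hz)).2
      (subset_convexHull ℝ (S : Set E) (hYS y hy))
      (subset_convexHull ℝ (S : Set E) huS) hmem
    exact absurd hlt (by rw [hzext]; exact lt_irrefl _)
  have hDne : ∀ x ∈ D, x ≠ (0 : E) := by
    intro x hx
    rw [hD, Finset.mem_image] at hx
    obtain ⟨⟨y, z⟩, hyz, rfl⟩ := hx
    rw [Finset.mem_filter, Finset.mem_product] at hyz
    obtain ⟨⟨hy, hz⟩, hne⟩ := hyz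
    intro h0
    have heq : (f u - f z) • (y - u) = (f u - f y) • (z - u) := by
      have := sub_eq_zero.1 h0
      exact this
    rcases lt_trichotomy (f u - f z) (f u - f y) with hlt | heq' | hgt
    · exact key y hy z hz heq hlt
    · apply hne
      have h1 : (f u - f z) • (y - u) = (f u - f z) • (z - u) := by rw [heq, heq']
      have h2 : y - u = z - u :=
        smul_right_injective E (ne_of_gt (sub_pos.2 (hYf z hz))) h1
      exact sub_left_injective h2
    · exact key z hz y hy heq.symm hgt
  -- generic exposing functional
  obtain ⟨g, hgexp, hgD⟩ := exists_exposing_generic S (hS u huS) D hDne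
  set t : E → ℝ := fun y => (g y - g u) / (f u - f y) with ht
  obtain ⟨w, hwY, hwmin⟩ := Y.exists_min_image t hYne
  have hwS : w ∈ S := hYS w hwY
  have hwf : f w < f u := hYf w hwY
  have hwu : w ≠ u := hYu w hwY
  have hgw : 0 < g w - g u := sub_pos.2 (hgexp w hwS hwu)
  have hfw : 0 < f u - f w := sub_pos.2 hwf
  have hc0 : 0 < t w := div_pos hgw hfw
  set φ : E →L[ℝ] ℝ := g + (t w) • f with hφ
  have hφval : ∀ x : E, φ x = g x + t w * f x := fun x => by
    simp [hφ, ContinuousLinearMap.add_apply, smul_eq_mul]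
  -- values on Y
  have hYval : ∀ y ∈ Y, φ y - φ u = (f u - f y) * (t y - t w) := by
    intro y hy
    have hfy : f u - f y ≠ 0 := ne_of_gt (sub_pos.2 (hYf y hy))
    rw [hφval, hφval, ht]
    field_simp
    ring
  have hφmin : ∀ y ∈ S, φ u ≤ φ y := by
    intro y hy
    by_cases hyY : y ∈ Y
    · have := hYval y hyY
      have h1 : 0 ≤ (f u - f y) * (t y - t w) :=
        mul_nonneg (le_of_lt (sub_pos.2 (hYf y hyY))) (sub_nonneg.2 (hwmin y hyY))
      linarith
    · by_cases hyu : y = u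
      · rw [hyu]
      · have hfy : f u ≤ f y := by
          by_contra hcon
          exact hyY (Finset.mem_filter.2 ⟨hy, not_le.1 hcon⟩)
        have hgy : g u < g y := hgexp y hy hyu
        rw [hφval, hφval]
        nlinarith [hc0]
  have hφeq : ∀ y ∈ S, φ y = φ u → y = u ∨ y = w := by
    intro y hy hyφ
    by_cases hyY : y ∈ Y
    · right
      by_contra hyw
      have h0 : (f u - f y) * (t y - t w) = 0 := by rw [← hYval y hyY]; linarith
      have hfy : 0 < f u - f y := sub_pos.2 (hYf y hyY)
      have hty : t y = t w := by
        rcases mul_eq_zero.1 h0 with h | h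
        · linarith
        · linarith [sub_eq_zero.1 h]
      -- t y = t w implies g (q y w) = 0
      have hgq : g (q y w) = 0 := by
        have hfw' : f u - f w ≠ 0 := ne_of_gt hfw
        have hfy' : f u - f y ≠ 0 := ne_of_gt hfy
        have hcross : (g y - g u) * (f u - f w) = (g w - g u) * (f u - f y) := by
          have := hty
          rw [ht] at this
          field_simp at this
          linarith [this]
        simp only [hq, map_sub, map_smul, smul_eq_mul]
        ring_nf
        ring_nf at hcross
        linarith [hcross]
      apply hgD (q y w) _ hgq
      rw [hD, Finset.mem_image]
      exact ⟨(y, w), Finset.mem_filter.2 ⟨Finset.mem_product.2 ⟨hyY, hwY⟩, hyw⟩, rfl⟩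
    · left
      by_contra hyu
      have hfy : f u ≤ f y := by
        by_contra hcon
        exact hyY (Finset.mem_filter.2 ⟨hy, not_le.1 hcon⟩)
      have hgy : g u < g y := hgexp y hy hyu
      rw [hφval, hφval] at hyφ
      nlinarith [hc0]
  have hφw : φ w = φ u := by
    have := hYval w hwY
    rw [sub_self, mul_zero] at this
    linarith
  -- the face is the segment
  have hface := isExtreme_face S φ (φ u) hφmin ⟨u, huS, rfl⟩
  have hfilter : S.filter (fun y => φ y = φ u) = {u, w} := by
    ext y
    rw [Finset.mem_filter, Finset.mem_insert, Finset.mem_singleton]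
    constructor
    · rintro ⟨hy, hyφ⟩
      exact hφeq y hy hyφ
    · rintro (rfl | rfl)
      · exact ⟨huS, rfl⟩
      · exact ⟨hwS, hφw⟩
  have hsegeq : {x ∈ convexHull ℝ (S : Set E) | φ x = φ u} = segment ℝ u w := by
    rw [face_hull_eq S φ (φ u) hφmin, hfilter]
    have : (({u, w} : Finset E) : Set E) = {u, w} := by simp
    rw [this, convexHull_pair]
  rw [hsegeq] at hface
  exact ⟨w, hwS, hwf, Ne.symm hwu, hface⟩

end Descent
section Transport

variable {E F : Type*} [AddCommGroup E] [Module ℝ E] [AddCommGroup F] [Module ℝ F]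

lemma isExtreme_image_iff (T : E →ᵃ[ℝ] F) (hT : Function.Injective T) {A B : Set E} :
    IsExtreme ℝ (T '' A) (T '' B) ↔ IsExtreme ℝ A B := by
  constructor
  · intro h
    constructor
    · intro a ha
      obtain ⟨a', ha', he⟩ := h.1 (Set.mem_image_of_mem T ha)
      rwa [← hT he]
    · intro x₁ h₁ x₂ h₂ x hx hseg
      have hseg' : T x ∈ openSegment ℝ (T x₁) (T x₂) := by
        rw [← image_openSegment]
        exact Set.mem_image_of_mem T hseg
      obtain ⟨b₁, hb₁, he₁⟩ := h.2 (Set.mem_image_of_mem T h₁) (Set.mem_image_of_mem T h₂)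
        (Set.mem_image_of_mem T hx) hseg'
      exact (hT he₁) ▸ hb₁
  · intro h
    constructor
    · exact Set.image_mono h.1
    · rintro x₁ ⟨a₁, ha₁, rfl⟩ x₂ ⟨a₂, ha₂, rfl⟩ x ⟨b, hb, rfl⟩ hseg
      rw [← image_openSegment] at hseg
      obtain ⟨c, hc, hcb⟩ := hseg
      have : b ∈ openSegment ℝ a₁ a₂ := (hT hcb) ▸ hc
      exact Set.mem_image_of_mem T (h.2 ha₁ ha₂ hb this)

lemma extremePoint_image_iff (T : E →ᵃ[ℝ] F) (hT : Function.Injective T) {A : Set E} {x : E} :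
    T x ∈ (T '' A).extremePoints ℝ ↔ x ∈ A.extremePoints ℝ := by
  rw [← isExtreme_singleton, ← isExtreme_singleton, ← Set.image_singleton,
    isExtreme_image_iff T hT]

end Transport

section GraphLemmas

lemma edgeGraph_adj_extreme {d : ℕ} {P : Set (Fin d → ℝ)} {a b : Fin d → ℝ}
    (h : (edgeGraph d P).Adj a b) :
    a ∈ P.extremePoints ℝ ∧ b ∈ P.extremePoints ℝ :=
  h.2.endpoints_mem

lemma walk_support_extreme {d : ℕ} {P : Set (Fin d → ℝ)} {a b : Fin d → ℝ}
    (p : (edgeGraph d P).Walk a b) (ha : a ∈ P.extremePoints ℝ) :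
    ∀ x ∈ p.support, x ∈ P.extremePoints ℝ := by
  induction p with
  | nil => intro x hx; rw [SimpleGraph.Walk.support_nil, List.mem_singleton] at hx; rwa [hx]
  | cons hadj q ih =>
    intro x hx
    rw [SimpleGraph.Walk.support_cons, List.mem_cons] at hx
    rcases hx with rfl | hx
    · exact ha
    · exact ih (edgeGraph_adj_extreme hadj).2 x hx

lemma edgeGraph_adj_image_iff {d₁ d₂ : ℕ}
    (T : (Fin d₁ → ℝ) →ᵃ[ℝ] (Fin d₂ → ℝ)) (hT : Function.Injective T)
    (A : Set (Fin d₁ → ℝ)) (a b : Fin d₁ → ℝ) :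
    (edgeGraph d₂ (T '' A)).Adj (T a) (T b) ↔ (edgeGraph d₁ A).Adj a b := by
  show (T a ≠ T b ∧ IsExtreme ℝ (T '' A) (segment ℝ (T a) (T b)))
    ↔ (a ≠ b ∧ IsExtreme ℝ A (segment ℝ a b))
  rw [← image_segment, isExtreme_image_iff T hT, hT.ne_iff]

/-- Forward graph homomorphism under an injective affine map. -/
def edgeGraphHom {d₁ d₂ : ℕ}
    (T : (Fin d₁ → ℝ) →ᵃ[ℝ] (Fin d₂ → ℝ)) (hT : Function.Injective T)
    (A : Set (Fin d₁ → ℝ)) : edgeGraph d₁ A →g edgeGraph d₂ (T '' A) where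
  toFun := fun x => T x
  map_rel' := fun {a b} h => (edgeGraph_adj_image_iff T hT A a b).2 h

/-- Backward graph homomorphism under an injective affine map. -/
noncomputable def edgeGraphHomBack {d₁ d₂ : ℕ}
    (T : (Fin d₁ → ℝ) →ᵃ[ℝ] (Fin d₂ → ℝ)) (hT : Function.Injective T)
    (A : Set (Fin d₁ → ℝ)) : edgeGraph d₂ (T '' A) →g edgeGraph d₁ A where
  toFun := Function.invFun T
  map_rel' := by
    intro x y h
    have hx : x ∈ T '' A := h.2.1 (left_mem_segment ℝ x y)
    have hy : y ∈ T '' A := h.2.1 (right_mem_segment ℝ x y)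
    obtain ⟨a, ha, rfl⟩ := hx
    obtain ⟨b, hb, rfl⟩ := hy
    rw [Function.leftInverse_invFun hT a, Function.leftInverse_invFun hT b]
    exact (edgeGraph_adj_image_iff T hT A a b).1 h

lemma dist_image {d₁ d₂ : ℕ}
    (T : (Fin d₁ → ℝ) →ᵃ[ℝ] (Fin d₂ → ℝ)) (hT : Function.Injective T)
    (A : Set (Fin d₁ → ℝ)) (a b : Fin d₁ → ℝ) :
    (edgeGraph d₂ (T '' A)).dist (T a) (T b) = (edgeGraph d₁ A).dist a b := by
  by_cases hr : (edgeGraph d₁ A).Reachable a b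
  · apply le_antisymm
    · obtain ⟨p, hp⟩ := hr.exists_walk_length_eq_dist
      calc (edgeGraph d₂ (T '' A)).dist (T a) (T b)
          ≤ (p.map (edgeGraphHom T hT A)).length := SimpleGraph.dist_le _
        _ = p.length := SimpleGraph.Walk.length_map _ _
        _ = _ := hp
    · have hr2 : (edgeGraph d₂ (T '' A)).Reachable (T a) (T b) := hr.map (edgeGraphHom T hT A)
      obtain ⟨p, hp⟩ := hr2.exists_walk_length_eq_dist
      have h1 := SimpleGraph.dist_le ((p.map (edgeGraphHomBack T hT A)).copy
        (Function.leftInverse_invFun hT a) (Function.leftInverse_invFun hT b))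
      refine h1.trans (le_of_eq ?_)
      rw [← hp]
      exact (SimpleGraph.Walk.length_copy _ _ _).trans (SimpleGraph.Walk.length_map _ _)
  · have hr2 : ¬ (edgeGraph d₂ (T '' A)).Reachable (T a) (T b) := by
      intro h2
      apply hr
      have h3 := h2.map (edgeGraphHomBack T hT A)
      have e1 : (edgeGraphHomBack T hT A) (T a) = a := Function.leftInverse_invFun hT a
      have e2 : (edgeGraphHomBack T hT A) (T b) = b := Function.leftInverse_invFun hT b
      rwa [e1, e2] at h3
    rw [SimpleGraph.dist_eq_zero_of_not_reachable hr,
      SimpleGraph.dist_eq_zero_of_not_reachable hr2]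

/-- Connectivity of the edge graph of a polytope. -/
lemma edgeGraph_connected {d : ℕ} (S : Finset (Fin d → ℝ))
    (hS : ∀ y ∈ S, y ∈ (convexHull ℝ (S : Set (Fin d → ℝ))).extremePoints ℝ)
    {a b : Fin d → ℝ} (ha : a ∈ S) (hb : b ∈ S) :
    (edgeGraph d (convexHull ℝ (S : Set (Fin d → ℝ)))).Reachable a b := by
  classical
  obtain ⟨g, hg⟩ := exists_exposing S (hS b hb)
  suffices H : ∀ n : ℕ, ∀ x, x ∈ S → (S.filter (fun y => g y < g x)).card ≤ n →
      (edgeGraph d (convexHull ℝ (S : Set (Fin d → ℝ)))).Reachable x b by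
    exact H _ a ha le_rfl
  intro n
  induction n with
  | zero =>
    intro x hx hcard
    by_cases hxb : x = b
    · rw [hxb]
    · exfalso
      have hbf : b ∈ S.filter (fun y => g y < g x) :=
        Finset.mem_filter.2 ⟨hb, hg x hx hxb⟩
      have := Finset.card_pos.2 ⟨b, hbf⟩
      omega
  | succ n ih =>
    intro x hx hcard
    by_cases hxb : x = b
    · rw [hxb]
    · have hex : ∃ y ∈ S, g y < g x := ⟨b, hb, hg x hx hxb⟩
      obtain ⟨w, hwS, hwlt, hne, hext⟩ := descent S hS hx g hex
      have hadj : (edgeGraph d (convexHull ℝ (S : Set (Fin d → ℝ)))).Adj x w := ⟨hne, hext⟩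
      have hsub : S.filter (fun y => g y < g w) ⊆ (S.filter (fun y => g y < g x)).erase w := by
        intro y hy
        obtain ⟨hyS, hylt⟩ := Finset.mem_filter.1 hy
        refine Finset.mem_erase.2 ⟨?_, Finset.mem_filter.2 ⟨hyS, hylt.trans hwlt⟩⟩
        intro h; rw [h] at hylt; exact lt_irrefl _ hylt
      have hwmem : w ∈ S.filter (fun y => g y < g x) := Finset.mem_filter.2 ⟨hwS, hwlt⟩
      have hcard' : (S.filter (fun y => g y < g w)).card ≤ n := by
        have h1 := Finset.card_le_card hsub
        have h2 := Finset.card_erase_of_mem hwmem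
        have h3 := Finset.card_pos.2 ⟨w, hwmem⟩
        omega
      exact (hadj.reachable).trans (ih w hwS hcard')

end GraphLemmas
section Bounds

lemma lattice_card_le {d k : ℕ} (V : Finset (Fin d → ℝ))
    (hlat : ∀ x ∈ V, ∀ i, ∃ m : ℕ, m ≤ k ∧ x i = (m : ℝ)) :
    V.card ≤ (k+1)^d := by
  classical
  have hfl : ∀ x ∈ V, ∀ i, ⌊x i⌋₊ ≤ k ∧ x i = (⌊x i⌋₊ : ℝ) := by
    intro x hx i
    obtain ⟨m, hm, he⟩ := hlat x hx i
    rw [he, Nat.floor_natCast]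
    exact ⟨hm, rfl⟩
  have h1 : V.card ≤ (Finset.univ : Finset (Fin d → Fin (k+1))).card := by
    apply Finset.card_le_card_of_injOn
      (fun x i => (⟨min ⌊x i⌋₊ k, Nat.lt_succ_of_le (min_le_right _ _)⟩ : Fin (k+1)))
      (fun _ _ => Finset.mem_univ _)
    intro x hx y hy hxy
    funext i
    have hxi := hfl x hx i
    have hyi := hfl y hy i
    have := congrFun hxy i
    simp only [Fin.mk.injEq] at this
    rw [min_eq_left hxi.1, min_eq_left hyi.1] at this
    rw [hxi.2, hyi.2, this]
  calc V.card ≤ _ := h1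
    _ = (k+1)^d := by simp [Finset.card_univ]

lemma dist_bound {d k : ℕ} {P : Set (Fin d → ℝ)} (hP : IsLatticePolytope d k P)
    {u v : Fin d → ℝ} (hu : u ∈ P.extremePoints ℝ) :
    (edgeGraph d P).dist u v ≤ (k+1)^d := by
  classical
  obtain ⟨V, hVne, hlat, rfl⟩ := hP
  by_cases hr : (edgeGraph d (convexHull ℝ (V : Set (Fin d → ℝ)))).Reachable u v
  · obtain ⟨p⟩ := hr
    set q := p.toPath with hq
    have hdist : (edgeGraph d (convexHull ℝ (V : Set (Fin d → ℝ)))).dist u v ≤ q.1.length :=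
      SimpleGraph.dist_le _
    have hnodup : q.1.support.Nodup := q.2.support_nodup
    have hsupp : ∀ x ∈ q.1.support, x ∈ (V : Set (Fin d → ℝ)) := fun x hx =>
      extremePoints_convexHull_subset (walk_support_extreme q.1 hu x hx)
    have hlen : q.1.support.length = q.1.length + 1 := SimpleGraph.Walk.length_support _
    have hcard : q.1.support.toFinset.card = q.1.support.length :=
      List.toFinset_card_of_nodup hnodup
    have hsub : q.1.support.toFinset ⊆ V := by
      intro x hx
      exact hsupp x (List.mem_toFinset.1 hx)
    have h2 : q.1.support.toFinset.card ≤ V.card := Finset.card_le_card hsub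
    have h3 : V.card ≤ (k+1)^d := lattice_card_le V hlat
    omega
  · rw [SimpleGraph.dist_eq_zero_of_not_reachable hr]
    exact Nat.zero_le _

lemma extremePoints_nonempty_of_lattice {d k : ℕ} {P : Set (Fin d → ℝ)}
    (hP : IsLatticePolytope d k P) : (P.extremePoints ℝ).Nonempty := by
  obtain ⟨V, hVne, hlat, rfl⟩ := hP
  apply IsCompact.extremePoints_nonempty (V.finite_toSet.isCompact_convexHull ℝ)
  exact ⟨hVne.choose, subset_convexHull ℝ _ hVne.choose_spec⟩

lemma polyDiam_le {d k : ℕ} {P : Set (Fin d → ℝ)} (hP : IsLatticePolytope d k P) :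
    polyDiam d P ≤ (k+1)^d := by
  apply csSup_le
  · obtain ⟨u, hu⟩ := extremePoints_nonempty_of_lattice hP
    exact ⟨0, u, hu, u, hu, SimpleGraph.dist_self⟩
  · rintro n ⟨u, hu, v, hv, rfl⟩
    exact dist_bound hP hu

lemma dist_le_deltaLP {d k : ℕ} {P : Set (Fin d → ℝ)} (hP : IsLatticePolytope d k P)
    {u v : Fin d → ℝ} (hu : u ∈ P.extremePoints ℝ) (hv : v ∈ P.extremePoints ℝ) :
    (edgeGraph d P).dist u v ≤ deltaLP d k := by
  have h1 : (edgeGraph d P).dist u v ≤ polyDiam d P := by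
    apply le_csSup
    · exact ⟨(k+1)^d, by rintro n ⟨u', hu', v', hv', rfl⟩; exact dist_bound hP hu'⟩
    · exact ⟨u, hu, v, hv, rfl⟩
  have h2 : polyDiam d P ≤ deltaLP d k := by
    apply le_csSup
    · refine ⟨(k+1)^d, ?_⟩
      rintro n ⟨P', hP', rfl⟩
      exact polyDiam_le hP'
    · exact ⟨P, hP, rfl⟩
  omega

end Bounds

section Maps

/-- Insertion of a fixed coordinate, as an affine map. -/
noncomputable def insertMap (e : ℕ) (i : Fin (e+1)) (c : ℝ) : (Fin e → ℝ) →ᵃ[ℝ] (Fin (e+1) → ℝ) where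
  toFun := fun y => i.insertNth c y
  linear :=
    { toFun := fun y => i.insertNth 0 y
      map_add' := by
        intro y z
        funext t
        refine i.succAboveCases ?_ (fun j => ?_) t
        · simp
        · simp [Fin.insertNth_apply_succAbove]
      map_smul' := by
        intro r y
        funext t
        refine i.succAboveCases ?_ (fun j => ?_) t
        · simp
        · simp [Fin.insertNth_apply_succAbove] }
  map_vadd' := by
    intro p v
    funext t
    refine i.succAboveCases ?_ (fun j => ?_) t
    · simp [Fin.insertNth_apply_same]
    · simp [Fin.insertNth_apply_succAbove]

@[simp] lemma insertMap_apply_same (e : ℕ) (i : Fin (e+1)) (c : ℝ) (y : Fin e → ℝ) :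
    insertMap e i c y i = c := by
  simp [insertMap]

@[simp] lemma insertMap_apply_succAbove (e : ℕ) (i : Fin (e+1)) (c : ℝ) (y : Fin e → ℝ)
    (j : Fin e) : insertMap e i c y (i.succAbove j) = y j := by
  simp [insertMap]

lemma insertMap_injective (e : ℕ) (i : Fin (e+1)) (c : ℝ) :
    Function.Injective (insertMap e i c) := by
  intro y z h
  funext j
  have := congrFun h (i.succAbove j)
  simpa using this

/-- Reflection `x ↦ c - x`, as an affine map. -/
noncomputable def reflMap (d : ℕ) (c : ℝ) : (Fin d → ℝ) →ᵃ[ℝ] (Fin d → ℝ) where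
  toFun := fun x => (fun _ => c) - x
  linear := -LinearMap.id
  map_vadd' := by
    intro p v
    funext j
    simp [Pi.sub_apply]
    ring

lemma reflMap_injective (d : ℕ) (c : ℝ) : Function.Injective (reflMap d c) := by
  intro x y h
  have : (fun _ => c) - x = (fun _ => c) - y := h
  funext j
  have := congrFun this j
  simp only [Pi.sub_apply] at this
  linarith

@[simp] lemma reflMap_apply (d : ℕ) (c : ℝ) (x : Fin d → ℝ) (j : Fin d) :
    reflMap d c x j = c - x j := rfl

end Maps
section Main

/-- Core estimate: if `u i + v i < k` for some coordinate `i`, the distance is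
strictly less than `δ(d-1,k) + k`. -/
lemma caseA (e k : ℕ) (V : Finset (Fin (e+1) → ℝ)) (hVne : V.Nonempty)
    (hlat : ∀ x ∈ V, ∀ j, ∃ m : ℕ, m ≤ k ∧ x j = (m : ℝ))
    {u v : Fin (e+1) → ℝ}
    (hu : u ∈ (convexHull ℝ (V : Set (Fin (e+1) → ℝ))).extremePoints ℝ)
    (hv : v ∈ (convexHull ℝ (V : Set (Fin (e+1) → ℝ))).extremePoints ℝ)
    (i : Fin (e+1)) (hsum : ⌊u i⌋₊ + ⌊v i⌋₊ + 1 ≤ k) :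
    (edgeGraph (e+1) (convexHull ℝ (V : Set (Fin (e+1) → ℝ)))).dist u v
      < deltaLP e k + k := by
  classical
  set P := convexHull ℝ (V : Set (Fin (e+1) → ℝ)) with hPdef
  have hfl : ∀ x ∈ V, ∀ j, ⌊x j⌋₊ ≤ k ∧ x j = (⌊x j⌋₊ : ℝ) := by
    intro x hx j
    obtain ⟨m, hm, he⟩ := hlat x hx j
    rw [he, Nat.floor_natCast]
    exact ⟨hm, rfl⟩
  set S := V.filter (fun y => y ∈ P.extremePoints ℝ) with hSdef
  have hSV' : ∀ y ∈ S, y ∈ V := fun y hy => (Finset.mem_filter.1 hy).1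
  have hSP : ∀ y ∈ S, y ∈ P.extremePoints ℝ := fun y hy => (Finset.mem_filter.1 hy).2
  have hPS : ∀ y, y ∈ P.extremePoints ℝ → y ∈ S := by
    intro y hy
    refine Finset.mem_filter.2 ⟨?_, hy⟩
    have hy' := hy
    rw [hPdef] at hy'
    exact extremePoints_convexHull_subset hy'
  have hhull : convexHull ℝ (S : Set (Fin (e+1) → ℝ)) = P := by
    have hcomp : IsCompact P := by rw [hPdef]; exact V.finite_toSet.isCompact_convexHull ℝ
    have hconv : Convex ℝ P := by rw [hPdef]; exact convex_convexHull ℝ _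
    have hKM : closure (convexHull ℝ (P.extremePoints ℝ)) = P :=
      closure_convexHull_extremePoints hcomp hconv
    apply Set.Subset.antisymm
    · apply convexHull_min _ hconv
      intro y hy
      rw [hPdef]
      exact subset_convexHull ℝ _ (hSV' y hy)
    · calc P = closure (convexHull ℝ (P.extremePoints ℝ)) := hKM.symm
        _ ⊆ closure (convexHull ℝ (S : Set (Fin (e+1) → ℝ))) :=
            closure_mono (convexHull_mono (fun y hy => hPS y hy))
        _ = convexHull ℝ (S : Set (Fin (e+1) → ℝ)) :=
            (S.finite_toSet.isClosed_convexHull ℝ).closure_eq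
  have hSx : ∀ y ∈ S, y ∈ (convexHull ℝ (S : Set (Fin (e+1) → ℝ))).extremePoints ℝ := by
    rw [hhull]; exact hSP
  have huS : u ∈ S := hPS u hu
  have hvS : v ∈ S := hPS v hv
  set L : (Fin (e+1) → ℝ) → ℕ := fun x => ⌊x i⌋₊ with hL
  obtain ⟨y₀, hy₀S, hy₀min⟩ := S.exists_min_image L ⟨u, huS⟩
  set m := L y₀ with hm
  -- descent to the minimizing face
  have descend : ∀ n : ℕ, ∀ x, x ∈ S → L x ≤ m + n →
      ∃ x', x' ∈ S ∧ L x' = m ∧ ∃ p : (edgeGraph (e+1) P).Walk x x', p.length ≤ n := by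
    intro n
    induction n with
    | zero =>
      intro x hx hLx
      exact ⟨x, hx, le_antisymm (by omega) (hy₀min x hx), SimpleGraph.Walk.nil, by simp⟩
    | succ n ih =>
      intro x hx hLx
      by_cases hxm : L x = m
      · exact ⟨x, hx, hxm, SimpleGraph.Walk.nil, by simp⟩
      · have hxm' : m < L x := lt_of_le_of_ne (hy₀min x hx) (Ne.symm hxm)
        have hex : ∃ y ∈ S, (ContinuousLinearMap.proj i : (Fin (e+1) → ℝ) →L[ℝ] ℝ) y
            < (ContinuousLinearMap.proj i : (Fin (e+1) → ℝ) →L[ℝ] ℝ) x := by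
          refine ⟨y₀, hy₀S, ?_⟩
          simp only [ContinuousLinearMap.proj_apply]
          rw [(hfl y₀ (hSV' y₀ hy₀S) i).2, (hfl x (hSV' x hx) i).2]
          exact_mod_cast hxm'
        obtain ⟨w, hwS, hwf, hne, hext⟩ := descent S hSx hx _ hex
        rw [hhull] at hext
        have hadj : (edgeGraph (e+1) P).Adj x w := ⟨hne, hext⟩
        have hLw : L w < L x := by
          simp only [ContinuousLinearMap.proj_apply] at hwf
          rw [(hfl w (hSV' w hwS) i).2, (hfl x (hSV' x hx) i).2] at hwf
          exact_mod_cast hwf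
        obtain ⟨x', hx'S, hx'm, p, hp⟩ := ih w hwS (by omega)
        refine ⟨x', hx'S, hx'm, SimpleGraph.Walk.cons hadj p, ?_⟩
        rw [SimpleGraph.Walk.length_cons]
        omega
  have hmu : m ≤ L u := hy₀min u huS
  have hmv : m ≤ L v := hy₀min v hvS
  obtain ⟨u', hu'S, hu'm, pu, hpu⟩ := descend (L u - m) u huS (by omega)
  obtain ⟨v', hv'S, hv'm, pv, hpv⟩ := descend (L v - m) v hvS (by omega)
  -- the minimizing face
  set V'' := S.filter (fun y => L y = m) with hV''def
  have hu'' : u' ∈ V'' := Finset.mem_filter.2 ⟨hu'S, hu'm⟩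
  have hv'' : v' ∈ V'' := Finset.mem_filter.2 ⟨hv'S, hv'm⟩
  have hmin' : ∀ y ∈ S, (m : ℝ) ≤ (ContinuousLinearMap.proj i : (Fin (e+1) → ℝ) →L[ℝ] ℝ) y := by
    intro y hy
    simp only [ContinuousLinearMap.proj_apply]
    rw [(hfl y (hSV' y hy) i).2]
    exact_mod_cast hy₀min y hy
  have hfeq : S.filter (fun y =>
      (ContinuousLinearMap.proj i : (Fin (e+1) → ℝ) →L[ℝ] ℝ) y = (m : ℝ)) = V'' := by
    ext y
    simp only [Finset.mem_filter, hV''def]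
    simp only [ContinuousLinearMap.proj_apply]
    constructor
    · rintro ⟨hy, hye⟩
      refine ⟨hy, ?_⟩
      rw [(hfl y (hSV' y hy) i).2] at hye
      exact_mod_cast hye
    · rintro ⟨hy, hye⟩
      refine ⟨hy, ?_⟩
      rw [(hfl y (hSV' y hy) i).2]
      exact_mod_cast hye
  have hface : IsExtreme ℝ P (convexHull ℝ (V'' : Set (Fin (e+1) → ℝ))) := by
    have h1 := isExtreme_face S (ContinuousLinearMap.proj i) (m : ℝ) hmin'
      ⟨y₀, hy₀S, by simp only [ContinuousLinearMap.proj_apply]; rw [(hfl y₀ (hSV' y₀ hy₀S) i).2]⟩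
    have h2 : {x ∈ convexHull ℝ (S : Set (Fin (e+1) → ℝ)) |
        (ContinuousLinearMap.proj i : (Fin (e+1) → ℝ) →L[ℝ] ℝ) x = (m : ℝ)}
        = convexHull ℝ (V'' : Set (Fin (e+1) → ℝ)) := by
      rw [face_hull_eq S _ _ hmin', hfeq]
    rw [h2, hhull] at h1
    exact h1
  have hV''x : ∀ y ∈ V'', y ∈ (convexHull ℝ (V'' : Set (Fin (e+1) → ℝ))).extremePoints ℝ := by
    intro y hy
    have hyS : y ∈ S := (Finset.mem_filter.1 hy).1
    have hsub : convexHull ℝ (V'' : Set (Fin (e+1) → ℝ)) ⊆ P := by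
      rw [← hhull]
      exact convexHull_mono (by exact_mod_cast Finset.filter_subset _ _)
    exact inter_extremePoints_subset_extremePoints_of_subset hsub
      ⟨subset_convexHull ℝ _ (Finset.mem_coe.2 hy), hSP y hyS⟩
  have hreach : (edgeGraph (e+1) (convexHull ℝ (V'' : Set (Fin (e+1) → ℝ)))).Reachable u' v' :=
    edgeGraph_connected V'' hV''x hu'' hv''
  -- project to dimension e
  set σ := insertMap e i (m : ℝ) with hσdef
  have hσinj := insertMap_injective e i (m : ℝ)
  set π : (Fin (e+1) → ℝ) → (Fin e → ℝ) := fun x j => x (i.succAbove j) with hπ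
  have hσπ : ∀ x ∈ V'', σ (π x) = x := by
    intro x hx
    funext t
    refine i.succAboveCases ?_ (fun j => ?_) t
    · rw [hσdef, insertMap_apply_same]
      have hxS := (Finset.mem_filter.1 hx).1
      have hxm : L x = m := (Finset.mem_filter.1 hx).2
      rw [(hfl x (hSV' x hxS) i).2]
      exact_mod_cast hxm.symm
    · rw [hσdef, insertMap_apply_succAbove]
  set Vq := V''.image π with hVqdef
  have hQF : σ '' (convexHull ℝ (Vq : Set (Fin e → ℝ)))
      = convexHull ℝ (V'' : Set (Fin (e+1) → ℝ)) := by
    rw [AffineMap.image_convexHull]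
    congr 1
    rw [Finset.coe_image, ← Set.image_comp]
    have heq : Set.EqOn (⇑σ ∘ π) id (V'' : Set (Fin (e+1) → ℝ)) := fun x hx => hσπ x hx
    rw [Set.EqOn.image_eq heq, Set.image_id]
  have hQlat : IsLatticePolytope e k (convexHull ℝ (Vq : Set (Fin e → ℝ))) := by
    refine ⟨Vq, ⟨π u', Finset.mem_image_of_mem π hu''⟩, ?_, rfl⟩
    intro x hx j
    obtain ⟨y, hy, rfl⟩ := Finset.mem_image.1 hx
    exact hlat y (hSV' y (Finset.mem_filter.1 hy).1) (i.succAbove j)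
  have hu'Q : π u' ∈ (convexHull ℝ (Vq : Set (Fin e → ℝ))).extremePoints ℝ := by
    rw [← extremePoint_image_iff σ hσinj, hQF, hσπ u' hu'']
    exact hV''x u' hu''
  have hv'Q : π v' ∈ (convexHull ℝ (Vq : Set (Fin e → ℝ))).extremePoints ℝ := by
    rw [← extremePoint_image_iff σ hσinj, hQF, hσπ v' hv'']
    exact hV''x v' hv''
  have hdistF : (edgeGraph (e+1) (convexHull ℝ (V'' : Set (Fin (e+1) → ℝ)))).dist u' v'
      = (edgeGraph e (convexHull ℝ (Vq : Set (Fin e → ℝ)))).dist (π u') (π v') := by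
    have h := dist_image σ hσinj (convexHull ℝ (Vq : Set (Fin e → ℝ))) (π u') (π v')
    rw [hQF, hσπ u' hu'', hσπ v' hv''] at h
    exact h
  have hmid : (edgeGraph e (convexHull ℝ (Vq : Set (Fin e → ℝ)))).dist (π u') (π v')
      ≤ deltaLP e k := dist_le_deltaLP hQlat hu'Q hv'Q
  obtain ⟨pm, hpm⟩ := hreach.exists_walk_length_eq_dist
  -- map the middle walk into P
  let ι : edgeGraph (e+1) (convexHull ℝ (V'' : Set (Fin (e+1) → ℝ))) →g edgeGraph (e+1) P :=
    ⟨id, fun {a b} h => ⟨h.1, hface.trans h.2⟩⟩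
  have htot : (edgeGraph (e+1) P).dist u v
      ≤ pu.length + pm.length + pv.length := by
    have h := SimpleGraph.dist_le (pu.append ((pm.map ι).append pv.reverse))
    rwa [SimpleGraph.Walk.length_append, SimpleGraph.Walk.length_append,
      SimpleGraph.Walk.length_reverse, SimpleGraph.Walk.length_map, ← add_assoc] at h
  have hmidlen : pm.length ≤ deltaLP e k := by
    rw [hpm, hdistF]
    exact hmid
  have hku : L u = ⌊u i⌋₊ := rfl
  have hkv : L v = ⌊v i⌋₊ := rfl
  omega

end Main

theorem cond1_antipodal (d k : ℕ) (hd : 3 ≤ d)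
    (P : Set (Fin d → ℝ)) (hP : IsLatticePolytope d k P)
    (u v : Fin d → ℝ) (hu : u ∈ P.extremePoints ℝ) (hv : v ∈ P.extremePoints ℝ)
    (hdist : (edgeGraph d P).dist u v = deltaLP (d - 1) k + k) :
    ∀ i, u i + v i = (k : ℝ) := by
  classical
  obtain ⟨e, rfl⟩ : ∃ e, d = e + 1 := ⟨d - 1, by omega⟩
  have hdist' : (edgeGraph (e+1) P).dist u v = deltaLP e k + k := by
    simpa using hdist
  obtain ⟨V, hVne, hlat, rfl⟩ := hP
  intro i
  have huV : u ∈ (V : Set (Fin (e+1) → ℝ)) := extremePoints_convexHull_subset hu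
  have hvV : v ∈ (V : Set (Fin (e+1) → ℝ)) := extremePoints_convexHull_subset hv
  obtain ⟨mu, hmuk, hmu⟩ := hlat u huV i
  obtain ⟨mv, hmvk, hmv⟩ := hlat v hvV i
  rw [hmu, hmv, ← Nat.cast_add]
  by_contra hne
  have hne' : mu + mv ≠ k := by
    intro h; exact hne (by rw [h])
  have hVne' : V.Nonempty := hVne
  rcases lt_or_gt_of_ne hne' with hlt | hgt
  · have hA := caseA e k V hVne' hlat hu hv i (by
      rw [show ⌊u i⌋₊ = mu from by rw [hmu, Nat.floor_natCast],
        show ⌊v i⌋₊ = mv from by rw [hmv, Nat.floor_natCast]]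
      omega)
    omega
  · set ρ := reflMap (e+1) (k : ℝ) with hρ
    have hρinj := reflMap_injective (e+1) (k : ℝ)
    set V2 := V.image (fun x => ρ x) with hV2
    have hV2ne : V2.Nonempty := hVne.image _
    have hV2hull : convexHull ℝ (V2 : Set (Fin (e+1) → ℝ))
        = ρ '' (convexHull ℝ (V : Set (Fin (e+1) → ℝ))) := by
      rw [AffineMap.image_convexHull, hV2, Finset.coe_image]
    have hlat2 : ∀ x ∈ V2, ∀ j, ∃ m : ℕ, m ≤ k ∧ x j = (m : ℝ) := by
      intro x hx j
      obtain ⟨y, hy, rfl⟩ := Finset.mem_image.1 hx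
      obtain ⟨my, hmyk, hmy⟩ := hlat y hy j
      refine ⟨k - my, by omega, ?_⟩
      rw [reflMap_apply, hmy, Nat.cast_sub hmyk]
    have hu2 : ρ u ∈ (convexHull ℝ (V2 : Set (Fin (e+1) → ℝ))).extremePoints ℝ := by
      rw [hV2hull, extremePoint_image_iff ρ hρinj]; exact hu
    have hv2 : ρ v ∈ (convexHull ℝ (V2 : Set (Fin (e+1) → ℝ))).extremePoints ℝ := by
      rw [hV2hull, extremePoint_image_iff ρ hρinj]; exact hv
    have hd2 : (edgeGraph (e+1) (convexHull ℝ (V2 : Set (Fin (e+1) → ℝ)))).dist (ρ u) (ρ v)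
        = (edgeGraph (e+1) (convexHull ℝ (V : Set (Fin (e+1) → ℝ)))).dist u v := by
      rw [hV2hull]; exact dist_image ρ hρinj _ u v
    have hfl2u : ⌊ρ u i⌋₊ = k - mu := by
      rw [reflMap_apply, hmu, ← Nat.cast_sub hmuk, Nat.floor_natCast]
    have hfl2v : ⌊ρ v i⌋₊ = k - mv := by
      rw [reflMap_apply, hmv, ← Nat.cast_sub hmvk, Nat.floor_natCast]
    have hA := caseA e k V2 hV2ne hlat2 hu2 hv2 i (by rw [hfl2u, hfl2v]; omega)
    rw [hd2] at hA
    omega
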